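/- arXiv:2505.24657 — 3 statements merged into one kernel-verified Lean document; each statement's English description precedes it below -/
import Mathlib

section
/- Let (X,d) be a compact metric space without isolated points and let (X, f_{1,∞}) be a non-autonomous discrete system. If f_{1,∞} is mixing, then for every compact metric space Y without isolated points and every transitive non-autonomous discrete system (Y, g_{1,∞}), the product system (X × Y, (f_n × g_n)_{n≥1}) is transitive. -/
open Set Filter

/-- `nds f i n` is the `n`-step composition `f_i^n = f (i+n-1) ∘ ⋯ ∘ f i`, with `nds f i 0 = id`. -/
def nds {X : Type*} (f : ℕ → X → X) (i : ℕ) : ℕ → X → X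
  | 0 => id
  | n + 1 => f (i + n) ∘ nds f i n

section TopDefs

variable {X : Type*} [TopologicalSpace X]

/-- The NDS `f_{1,∞}` is (topologically) transitive. -/
def NDSTransitive (f : ℕ → X → X) : Prop :=
  ∀ U V : Set X, IsOpen U → U.Nonempty → IsOpen V → V.Nonempty →
    ∃ n : ℕ, 0 < n ∧ (nds f 1 n '' U ∩ V).Nonempty

/-- The NDS `f_{1,∞}` is mixing. -/
def NDSMixing (f : ℕ → X → X) : Prop :=
  ∀ U V : Set X, IsOpen U → U.Nonempty → IsOpen V → V.Nonempty →
    ∃ N : ℕ, ∀ n : ℕ, N ≤ n → (nds f 1 n '' U ∩ V).Nonempty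

/-- The NDS `f_{1,∞}` is weakly mixing. -/
def NDSWeaklyMixing (f : ℕ → X → X) : Prop :=
  ∀ U₁ U₂ V₁ V₂ : Set X, IsOpen U₁ → U₁.Nonempty → IsOpen U₂ → U₂.Nonempty →
    IsOpen V₁ → V₁.Nonempty → IsOpen V₂ → V₂.Nonempty →
    ∃ n : ℕ, 0 < n ∧ (nds f 1 n '' U₁ ∩ V₁).Nonempty ∧ (nds f 1 n '' U₂ ∩ V₂).Nonempty

/-- The NDS `f_{1,∞}` is multi-transitive. -/
def NDSMultiTransitive (f : ℕ → X → X) : Prop :=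
  ∀ m : ℕ, 0 < m → ∀ U V : Fin m → Set X,
    (∀ j, IsOpen (U j)) → (∀ j, (U j).Nonempty) →
    (∀ j, IsOpen (V j)) → (∀ j, (V j).Nonempty) →
    ∃ l : ℕ, 0 < l ∧ ∀ j : Fin m, (nds f 1 (l * (j.1 + 1)) '' U j ∩ V j).Nonempty

/-- The NDS `f_{1,∞}` is totally transitive. -/
def NDSTotallyTransitive (f : ℕ → X → X) : Prop :=
  ∀ k : ℕ, 0 < k → ∀ U V : Set X, IsOpen U → U.Nonempty → IsOpen V → V.Nonempty →
    ∃ n : ℕ, 0 < n ∧ (nds f 1 (n * k) '' U ∩ V).Nonempty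

/-- The NDS `f_{1,∞}` is minimal: every orbit is dense. -/
def NDSMinimal (f : ℕ → X → X) : Prop :=
  ∀ x : X, Dense (Set.range fun n : ℕ => nds f 1 n x)

/-- The NDS `f_{1,∞}` is feeble open. -/
def FeebleOpen (f : ℕ → X → X) : Prop :=
  ∀ i : ℕ, 1 ≤ i → ∀ U : Set X, IsOpen U → U.Nonempty → (interior (f i '' U)).Nonempty

/-- A set of positive integers is syndetic (has bounded gaps). -/
def SyndeticSet (A : Set ℕ) : Prop :=
  ∃ M : ℕ, ∀ i : ℕ, 1 ≤ i → ∃ j ∈ A, i ≤ j ∧ j ≤ i + M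

/-- A set of positive integers is thick (contains arbitrarily long runs). -/
def ThickSet (A : Set ℕ) : Prop :=
  ∀ p : ℕ, ∃ n : ℕ, ∀ j : ℕ, n ≤ j → j ≤ n + p → j ∈ A

/-- The NDS `f_{1,∞}` is syndetically transitive. -/
def NDSSyndeticallyTransitive (f : ℕ → X → X) : Prop :=
  ∀ U V : Set X, IsOpen U → U.Nonempty → IsOpen V → V.Nonempty →
    SyndeticSet {n : ℕ | 0 < n ∧ (nds f 1 n '' U ∩ V).Nonempty}

/-- The NDS `f_{1,∞}` has dense periodic points. -/
def NDSDensePeriodicPoints (f : ℕ → X → X) : Prop :=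
  Dense {x : X | ∃ k : ℕ, 0 < k ∧ ∀ n : ℕ, 0 < n → nds f 1 (k * n) x = x}

/-- The NDS `f_{k,∞}` is strongly transitive. -/
def NDSStronglyTransitiveFrom (f : ℕ → X → X) (k : ℕ) : Prop :=
  ∀ U : Set X, IsOpen U → U.Nonempty →
    ∃ M : ℕ, 0 < M ∧ (⋃ i ∈ Set.Icc 1 M, nds f k i '' U) = Set.univ

/-- An autonomous map is transitive. -/
def MapTransitive {Y : Type*} [TopologicalSpace Y] (g : Y → Y) : Prop :=
  ∀ U V : Set Y, IsOpen U → U.Nonempty → IsOpen V → V.Nonempty →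
    ∃ n : ℕ, 0 < n ∧ (g^[n] '' U ∩ V).Nonempty

/-- An autonomous map is weakly mixing. -/
def MapWeaklyMixing {Y : Type*} [TopologicalSpace Y] (g : Y → Y) : Prop :=
  ∀ U₁ U₂ V₁ V₂ : Set Y, IsOpen U₁ → U₁.Nonempty → IsOpen U₂ → U₂.Nonempty →
    IsOpen V₁ → V₁.Nonempty → IsOpen V₂ → V₂.Nonempty →
    ∃ n : ℕ, 0 < n ∧ (g^[n] '' U₁ ∩ V₁).Nonempty ∧ (g^[n] '' U₂ ∩ V₂).Nonempty

/-- An autonomous map is totally transitive. -/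
def MapTotallyTransitive {Y : Type*} [TopologicalSpace Y] (g : Y → Y) : Prop :=
  ∀ k : ℕ, 0 < k → ∀ U V : Set Y, IsOpen U → U.Nonempty → IsOpen V → V.Nonempty →
    ∃ n : ℕ, 0 < n ∧ (g^[n * k] '' U ∩ V).Nonempty

/-- An autonomous map is syndetically transitive. -/
def MapSyndeticallyTransitive {Y : Type*} [TopologicalSpace Y] (g : Y → Y) : Prop :=
  ∀ U V : Set Y, IsOpen U → U.Nonempty → IsOpen V → V.Nonempty →
    SyndeticSet {n : ℕ | 0 < n ∧ (g^[n] '' U ∩ V).Nonempty}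

/-- An autonomous map is minimal. -/
def MapMinimal {Y : Type*} [TopologicalSpace Y] (g : Y → Y) : Prop :=
  ∀ x : Y, Dense (Set.range fun n : ℕ => g^[n] x)

end TopDefs

section MetricDefs

variable {X : Type*} [MetricSpace X]

/-- The compositions `(f_r^k)` converge collectively to `(f^k)` (w.r.t. the supremum metric). -/
def CollectivelyConverges (f : ℕ → X → X) (g : X → X) : Prop :=
  ∀ ε : ℝ, 0 < ε → ∃ r₀ : ℕ, ∀ r : ℕ, r₀ ≤ r → ∀ k : ℕ, 1 ≤ k → ∀ x : X,
    dist (nds f r k x) (g^[k] x) < ε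

/-- `N(U, δ)`: the times at which the NDS is `δ`-sensitive on `U`. -/
def SensSet (f : ℕ → X → X) (U : Set X) (δ : ℝ) : Set ℕ :=
  {n : ℕ | 0 < n ∧ ∃ x ∈ U, ∃ y ∈ U, δ < dist (nds f 1 n x) (nds f 1 n y)}

/-- The NDS `f_{1,∞}` is multi-sensitive. -/
def NDSMultiSensitive (f : ℕ → X → X) : Prop :=
  ∃ δ : ℝ, 0 < δ ∧ ∀ m : ℕ, 0 < m → ∀ U : Fin m → Set X,
    (∀ i, IsOpen (U i)) → (∀ i, (U i).Nonempty) → (⋂ i, SensSet f (U i) δ).Nonempty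

/-- The NDS `f_{1,∞}` is thickly sensitive. -/
def NDSThicklySensitive (f : ℕ → X → X) : Prop :=
  ∃ δ : ℝ, 0 < δ ∧ ∀ U : Set X, IsOpen U → U.Nonempty → ThickSet (SensSet f U δ)

/-- The NDS `f_{1,∞}` is syndetically sensitive. -/
def NDSSyndeticallySensitive (f : ℕ → X → X) : Prop :=
  ∃ δ : ℝ, 0 < δ ∧ ∀ U : Set X, IsOpen U → U.Nonempty → SyndeticSet (SensSet f U δ)

/-- The NDS `f_{1,∞}` is mildly mixing: its product with every transitive NDS on a compact
metric space is transitive. -/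
def NDSMildlyMixing (f : ℕ → X → X) : Prop :=
  ∀ (Y : Type*) [MetricSpace Y] [CompactSpace Y] (g : ℕ → Y → Y),
    (∀ n : ℕ, 1 ≤ n → Continuous (g n)) → NDSTransitive g →
    NDSTransitive (fun n (p : X × Y) => (f n p.1, g n p.2))

/-- The NDS `f_{1,∞}` is Li–Yorke chaotic. -/
def LiYorkeChaotic (f : ℕ → X → X) : Prop :=
  ∃ S : Set X, ¬S.Countable ∧ ∀ x ∈ S, ∀ y ∈ S, x ≠ y →
    Filter.liminf (fun n : ℕ => dist (nds f 1 n x) (nds f 1 n y)) Filter.atTop = 0 ∧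
    0 < Filter.limsup (fun n : ℕ => dist (nds f 1 n x) (nds f 1 n y)) Filter.atTop

end MetricDefs

lemma nds_prod_aux {X Y : Type*} (f : ℕ → X → X) (g : ℕ → Y → Y) (i n : ℕ) (p : X × Y) :
    nds (fun n (p : X × Y) => (f n p.1, g n p.2)) i n p = (nds f i n p.1, nds g i n p.2) := by
  induction n with
  | zero => simp [nds]
  | succ n ih => simp [nds, ih]

lemma nds_continuous_aux {Y : Type*} [TopologicalSpace Y] (g : ℕ → Y → Y)
    (hg : ∀ n, 1 ≤ n → Continuous (g n)) (n : ℕ) : Continuous (nds g 1 n) := by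
  induction n with
  | zero => exact continuous_id
  | succ n ih => exact (hg (1 + n) (by omega)).comp ih

lemma open_diff_finite_nonempty {Y : Type*} [MetricSpace Y]
    (hY : ∀ y : Y, ¬IsOpen ({y} : Set Y)) {V : Set Y} (hV : IsOpen V) (hVne : V.Nonempty)
    {F : Set Y} (hF : F.Finite) : (V \ F).Nonempty := by
  by_contra h
  have hsub : V ⊆ F := by
    intro x hx
    by_contra hxF
    exact h ⟨x, hx, hxF⟩
  have hVfin : V.Finite := hF.subset hsub
  obtain ⟨v, hv⟩ := hVne
  have hclosed : IsClosed (V \ {v}) := ((hVfin.subset diff_subset).isClosed)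
  have : IsOpen ({v} : Set Y) := by
    have : ({v} : Set Y) = V \ (V \ {v}) := by
      ext x
      simp only [mem_singleton_iff, mem_diff, not_and, not_not]
      constructor
      · rintro rfl; exact ⟨hv, fun _ => rfl⟩
      · rintro ⟨hxV, h2⟩; exact h2 hxV
    rw [this]
    exact hV.sdiff hclosed
  exact hY v this

lemma trans_large {Y : Type*} [MetricSpace Y]
    (hY : ∀ y : Y, ¬IsOpen ({y} : Set Y)) (g : ℕ → Y → Y)
    (hg : ∀ n, 1 ≤ n → Continuous (g n)) (htrans : NDSTransitive g)
    (U V : Set Y) (hU : IsOpen U) (hUne : U.Nonempty) (hV : IsOpen V) (hVne : V.Nonempty)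
    (N : ℕ) : ∃ n, N < n ∧ (nds g 1 n '' U ∩ V).Nonempty := by
  obtain ⟨u₀, hu₀⟩ := hUne
  set F : Set Y := (fun n => nds g 1 n u₀) '' (Set.Icc 1 N) with hFdef
  have hFfin : F.Finite := (Set.finite_Icc 1 N).image _
  obtain ⟨v, hvV, hvF⟩ := open_diff_finite_nonempty hY hV hVne hFfin
  obtain ⟨r, hrpos, hrball⟩ := Metric.isOpen_iff.mp hV v hvV
  have hFc : IsClosed F := hFfin.isClosed
  obtain ⟨d, hdpos, hdball⟩ := Metric.isOpen_iff.mp hFc.isOpen_compl v hvF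
  set ε : ℝ := min r (d / 2) with hεdef
  have hεpos : 0 < ε := lt_min hrpos (by linarith)
  -- build the shrunk open set around u₀
  set W : Set Y := U ∩ ⋂ n ∈ Finset.Icc 1 N, (nds g 1 n) ⁻¹' (Metric.ball (nds g 1 n u₀) ε)
    with hWdef
  have hWopen : IsOpen W := by
    apply hU.inter
    apply isOpen_biInter_finset
    intro n _
    exact (Metric.isOpen_ball).preimage (nds_continuous_aux g hg n)
  have hWne : W.Nonempty := by
    refine ⟨u₀, hu₀, ?_⟩
    simp only [Set.mem_iInter, Set.mem_preimage, Metric.mem_ball]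
    intro n _
    simpa using hεpos
  obtain ⟨m, hmpos, z, ⟨u, huW, huz⟩, hzball⟩ :=
    htrans W (Metric.ball v ε) hWopen hWne Metric.isOpen_ball ⟨v, by simpa using hεpos⟩
  have hmN : N < m := by
    by_contra hle
    push_neg at hle
    have hmIcc : m ∈ Finset.Icc 1 N := Finset.mem_Icc.mpr ⟨hmpos, hle⟩
    have h1 : nds g 1 m u ∈ Metric.ball (nds g 1 m u₀) ε := by
      have := huW.2
      simp only [Set.mem_iInter, Set.mem_preimage] at this
      exact this m hmIcc
    have h2 : z ∈ Metric.ball v ε := hzball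
    have hym : nds g 1 m u₀ ∈ F := ⟨m, Set.mem_Icc.mpr ⟨hmpos, hle⟩, rfl⟩
    have hdist : d ≤ dist v (nds g 1 m u₀) := by
      by_contra hlt
      push_neg at hlt
      exact (hdball (Metric.mem_ball.mpr (by rw [dist_comm]; exact hlt))) hym
    rw [Metric.mem_ball] at h1 h2
    have : dist v (nds g 1 m u₀) ≤ dist v z + dist z (nds g 1 m u₀) := dist_triangle _ _ _
    rw [← huz] at h2
    have hεd : ε ≤ d / 2 := min_le_right _ _
    have := dist_comm z v
    nlinarith [dist_comm (nds g 1 m u) v, dist_triangle v (nds g 1 m u) (nds g 1 m u₀),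
      dist_comm (nds g 1 m u) (nds g 1 m u₀), h1, h2]
  refine ⟨m, hmN, z, ⟨u, huW.1, huz⟩, ?_⟩
  apply hrball
  rw [Metric.mem_ball] at hzball ⊢
  exact lt_of_lt_of_le hzball (min_le_left _ _)

theorem mixing_product_transitive {X : Type*} [MetricSpace X] [CompactSpace X]
    (hX : ∀ x : X, ¬IsOpen ({x} : Set X))
    (f : ℕ → X → X) (hcont : ∀ n : ℕ, 1 ≤ n → Continuous (f n))
    (hmix : NDSMixing f) :
    ∀ (Y : Type*) [MetricSpace Y] [CompactSpace Y],
      (∀ y : Y, ¬IsOpen ({y} : Set Y)) →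
      ∀ g : ℕ → Y → Y, (∀ n : ℕ, 1 ≤ n → Continuous (g n)) → NDSTransitive g →
        NDSTransitive (fun n (p : X × Y) => (f n p.1, g n p.2)) := by
  intro Y _ _ hY g hgc hgt U V hU hUne hV hVne
  obtain ⟨p, hp⟩ := hUne
  obtain ⟨q, hq⟩ := hVne
  obtain ⟨r, hrpos, hrball⟩ := Metric.isOpen_iff.mp hU p hp
  obtain ⟨s, hspos, hsball⟩ := Metric.isOpen_iff.mp hV q hq
  obtain ⟨N, hN⟩ := hmix (Metric.ball p.1 r) (Metric.ball q.1 s) Metric.isOpen_ball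
    ⟨p.1, by simpa using hrpos⟩ Metric.isOpen_ball ⟨q.1, by simpa using hspos⟩
  obtain ⟨n, hnN, y', ⟨y, hy, hyeq⟩, hy'⟩ := trans_large hY g hgc hgt
    (Metric.ball p.2 r) (Metric.ball q.2 s) Metric.isOpen_ball
    ⟨p.2, by simpa using hrpos⟩ Metric.isOpen_ball ⟨q.2, by simpa using hspos⟩ N
  obtain ⟨x', ⟨x, hx, hxeq⟩, hx'⟩ := hN n (le_of_lt hnN)
  refine ⟨n, by omega, (x', y'), ⟨(x, y), ?_, ?_⟩, ?_⟩
  · apply hrball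
    rw [← ball_prod_same]
    exact ⟨hx, hy⟩
  · rw [nds_prod_aux, hxeq, hyeq]
  · apply hsball
    rw [← ball_prod_same]
    exact ⟨hx', hy'⟩
end

section
/- Let (X,d) be a compact metric space and let (X, f_{1,∞}) be a non-autonomous discrete system. If f_{1,∞} is mildly mixing, then f_{1,∞} is multi-transitive. -/
open Set Filter

section AuxNDS

lemma nds_succ' {X : Type*} (f : ℕ → X → X) (i n : ℕ) :
    nds f i (n + 1) = f (i + n) ∘ nds f i n := rfl

lemma nds_add' {X : Type*} (f : ℕ → X → X) (i a : ℕ) :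
    ∀ b, nds f i (a + b) = nds f (i + a) b ∘ nds f i a := by
  intro b
  induction b with
  | zero => rfl
  | succ b ih =>
    show nds f i ((a + b) + 1) = _
    rw [nds_succ', ih, nds_succ']
    funext x
    simp [Function.comp, Nat.add_assoc]

lemma nds_continuous' {X : Type*} [TopologicalSpace X] {f : ℕ → X → X}
    (hf : ∀ n : ℕ, 1 ≤ n → Continuous (f n)) {i : ℕ} (hi : 1 ≤ i) (k : ℕ) :
    Continuous (nds f i k) := by
  induction k with
  | zero => exact continuous_id
  | succ k ih => exact (hf (i + k) (le_trans hi (Nat.le_add_right i k))).comp ih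

lemma nds_prod' {X Y : Type*} (F : ℕ → X → X) (G : ℕ → Y → Y) (i : ℕ) :
    ∀ (n : ℕ) (p : X × Y),
      nds (fun k (q : X × Y) => (F k q.1, G k q.2)) i n p = (nds F i n p.1, nds G i n p.2) := by
  intro n
  induction n with
  | zero => intro p; rfl
  | succ n ih => intro p; simp [nds_succ', Function.comp, ih]

lemma nds_conj' {Z W : Type*} (σ : Z → W) (τ : W → Z) (hτσ : ∀ z, τ (σ z) = z)
    (H : ℕ → Z → Z) (i : ℕ) :
    ∀ (n : ℕ) (z : Z), nds (fun k => σ ∘ H k ∘ τ) i n (σ z) = σ (nds H i n z) := by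
  intro n
  induction n with
  | zero => intro z; rfl
  | succ n ih =>
    intro z
    show (σ ∘ H (i + n) ∘ τ) (nds (fun k => σ ∘ H k ∘ τ) i n (σ z)) = _
    rw [ih]
    simp [hτσ, nds_succ']

lemma transitive_conj' {Z W : Type*} [TopologicalSpace Z] [TopologicalSpace W] (e : Z ≃ₜ W)
    (H : ℕ → Z → Z) (h : NDSTransitive H) :
    NDSTransitive (fun k => ⇑e ∘ H k ∘ ⇑e.symm) := by
  intro A B hA hAne hB hBne
  obtain ⟨n, hn, x, ⟨z, hzA, hz⟩, hxB⟩ :=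
    h (⇑e ⁻¹' A) (⇑e ⁻¹' B) (hA.preimage e.continuous)
      (by obtain ⟨a, ha⟩ := hAne; exact ⟨e.symm a, by simpa using ha⟩)
      (hB.preimage e.continuous)
      (by obtain ⟨b, hb⟩ := hBne; exact ⟨e.symm b, by simpa using hb⟩)
  refine ⟨n, hn, e x, ⟨e z, hzA, ?_⟩, hxB⟩
  rw [nds_conj' (⇑e) (⇑e.symm) (fun z => e.symm_apply_apply z) H 1 n z, hz]

lemma transitive_prod_conj' {X Z W : Type*} [TopologicalSpace X] [TopologicalSpace Z]
    [TopologicalSpace W] (e : Z ≃ₜ W) (f : ℕ → X → X) (H : ℕ → Z → Z)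
    (h : NDSTransitive (fun k (q : X × W) => (f k q.1, (fun k' => ⇑e ∘ H k' ∘ ⇑e.symm) k q.2))) :
    NDSTransitive (fun k (q : X × Z) => (f k q.1, H k q.2)) := by
  intro A B hA hAne hB hBne
  have hE' : Continuous (fun p : X × W => (p.1, e.symm p.2)) :=
    continuous_fst.prodMk (e.symm.continuous.comp continuous_snd)
  obtain ⟨n, hn, w, ⟨q, hqA, hqw⟩, hwB⟩ :=
    h ((fun p : X × W => (p.1, e.symm p.2)) ⁻¹' A) ((fun p : X × W => (p.1, e.symm p.2)) ⁻¹' B)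
      (hA.preimage hE')
      (by obtain ⟨a, ha⟩ := hAne; exact ⟨(a.1, e a.2), by simpa using ha⟩)
      (hB.preimage hE')
      (by obtain ⟨b, hb⟩ := hBne; exact ⟨(b.1, e b.2), by simpa using hb⟩)
  refine ⟨n, hn, (w.1, e.symm w.2), ⟨(q.1, e.symm q.2), hqA, ?_⟩, hwB⟩
  rw [nds_prod'] at hqw ⊢
  have h2 : nds (fun k => ⇑e ∘ H k ∘ ⇑e.symm) 1 n q.2 = w.2 := by
    have := congrArg Prod.snd hqw; simpa using this
  have h1 : nds f 1 n q.1 = w.1 := by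
    have := congrArg Prod.fst hqw; simpa using this
  have h3 : nds (fun k => ⇑e ∘ H k ∘ ⇑e.symm) 1 n (e (e.symm q.2)) = e (nds H 1 n (e.symm q.2)) :=
    nds_conj' (⇑e) (⇑e.symm) (fun z => e.symm_apply_apply z) H 1 n (e.symm q.2)
  rw [e.apply_symm_apply] at h3
  rw [h3] at h2
  simp only [Prod.mk.injEq]
  exact ⟨h1, by rw [← h2, e.symm_apply_apply]⟩

/-- Block-counting function: `clK K n = ⌈n / K⌉`. -/
def clK (K : ℕ) : ℕ → ℕ
  | 0 => 0
  | n + 1 => if n % K = 0 then n / K + 1 else clK K n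

lemma clK_block (K : ℕ) (hK : 0 < K) (l : ℕ) :
    ∀ r : ℕ, 1 ≤ r → r ≤ K → clK K (l * K + r) = l + 1 := by
  intro r
  induction r with
  | zero => omega
  | succ r ih =>
    intro _ hrK
    by_cases hr : r = 0
    · subst hr
      have h1 : (l * K) % K = 0 := Nat.mul_mod_left l K
      have h2 : (l * K) / K = l := Nat.mul_div_cancel l hK
      simp [clK, h1, h2]
    · have hmod : (l * K + r) % K = r := by
        rw [Nat.mul_comm, Nat.mul_add_mod, Nat.mod_eq_of_lt (by omega)]
      have : clK K (l * K + r + 1) = clK K (l * K + r) := by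
        simp [clK, hmod, hr]
      rw [show l * K + (r + 1) = (l * K + r) + 1 from rfl, this, ih (by omega) (by omega)]

lemma clK_mul (K : ℕ) (hK : 0 < K) (l : ℕ) : clK K (l * K) = l := by
  cases l with
  | zero => simp [clK]
  | succ l =>
    have := clK_block K hK l K hK le_rfl
    rw [show (l + 1) * K = l * K + K by ring]
    exact this

/-- The auxiliary "slowed down multi-speed" system used in the induction. -/
def auxH {X Y : Type*} (f : ℕ → X → X) (g : ℕ → Y → Y) {m : ℕ} (c : Fin (m + 1) → ℕ)
    (K : ℕ) [NeZero K] :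
    ℕ → ((Fin m → X) × Y × Fin K) → ((Fin m → X) × Y × Fin K) := fun n z =>
  if (n - 1) % K = 0 then
    (fun j => nds f (((n - 1) / K) * c j.succ + 1) (c j.succ) (z.1 j),
      g ((n - 1) / K + 1) z.2.1, z.2.2 + 1)
  else (z.1, z.2.1, z.2.2 + 1)

open Fin.NatCast in
lemma auxH_iter {X Y : Type*} (f : ℕ → X → X) (g : ℕ → Y → Y) {m : ℕ} (c : Fin (m + 1) → ℕ)
    (K : ℕ) [NeZero K] :
    ∀ (n : ℕ) (z : (Fin m → X) × Y × Fin K),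
      nds (auxH f g c K) 1 n z =
        (fun j => nds f 1 (clK K n * c j.succ) (z.1 j),
          nds g 1 (clK K n) z.2.1, z.2.2 + (n : Fin K)) := by
  intro n
  induction n with
  | zero => intro z; simp [clK, Nat.zero_mul, nds]
  | succ n ih =>
    intro z
    have hstep : nds (auxH f g c K) 1 (n + 1) z = auxH f g c K (1 + n) (nds (auxH f g c K) 1 n z) := rfl
    rw [hstep, ih]
    have h11 : 1 + n - 1 = n := by omega
    have hcast : ((n + 1 : ℕ) : Fin K) = (n : Fin K) + 1 := by
      push_cast; ring
    by_cases h : n % K = 0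
    · obtain ⟨q, hq⟩ := Nat.dvd_of_mod_eq_zero h
      have hdiv : n / K = q := by
        rw [hq]; exact Nat.mul_div_cancel_left q (Nat.pos_of_ne_zero (NeZero.ne K))
      have hcln : clK K n = q := by
        rw [hq, mul_comm, clK_mul K (Nat.pos_of_ne_zero (NeZero.ne K))]
      have hcln1 : clK K (n + 1) = q + 1 := by
        simp [clK, h, hdiv]
      simp only [auxH, h11, h, if_true, hcln, hcln1, hdiv]
      refine Prod.ext ?_ (Prod.ext ?_ ?_)
      · funext j
        show nds f (q * c j.succ + 1) (c j.succ) (nds f 1 (q * c j.succ) (z.1 j)) =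
          nds f 1 ((q + 1) * c j.succ) (z.1 j)
        rw [show (q + 1) * c j.succ = q * c j.succ + c j.succ by ring,
          nds_add' f 1 (q * c j.succ) (c j.succ)]
        simp [Nat.add_comm]
      · show g (q + 1) (nds g 1 q z.2.1) = nds g 1 (q + 1) z.2.1
        rw [nds_succ']
        simp [Nat.add_comm]
      · show z.2.2 + (n : Fin K) + 1 = z.2.2 + ((n + 1 : ℕ) : Fin K)
        rw [hcast, add_assoc]
    · have hcln1 : clK K (n + 1) = clK K n := by simp [clK, h]
      simp only [auxH, h11, h, if_false, hcln1]
      refine Prod.ext rfl (Prod.ext rfl ?_)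
      show z.2.2 + (n : Fin K) + 1 = z.2.2 + ((n + 1 : ℕ) : Fin K)
      rw [hcast, add_assoc]

end AuxNDS

open Fin.NatCast in
set_option synthInstance.maxHeartbeats 1000000 in
set_option maxHeartbeats 1000000 in
lemma aux_multi.{u, v, w} {X : Type u} [MetricSpace X] [CompactSpace X]
    (f : ℕ → X → X) (hcont : ∀ n : ℕ, 1 ≤ n → Continuous (f n))
    (hmm : NDSMildlyMixing.{u, w} f)
    {Y : Type v} [MetricSpace Y] [CompactSpace Y] (g : ℕ → Y → Y)
    (hgc : ∀ n : ℕ, 1 ≤ n → Continuous (g n)) (hgt : NDSTransitive g) :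
    ∀ (m : ℕ) (c : Fin m → ℕ), (∀ j, 0 < c j) →
      ∀ U V : Fin m → Set X, (∀ j, IsOpen (U j)) → (∀ j, (U j).Nonempty) →
        (∀ j, IsOpen (V j)) → (∀ j, (V j).Nonempty) →
      ∀ Uy Vy : Set Y, IsOpen Uy → Uy.Nonempty → IsOpen Vy → Vy.Nonempty →
      ∃ l : ℕ, 0 < l ∧ (∀ j, (nds f 1 (l * c j) '' U j ∩ V j).Nonempty) ∧
        (nds g 1 l '' Uy ∩ Vy).Nonempty := by
  intro m
  induction m with
  | zero =>
    intro c hc U V hUo hUne hVo hVne Uy Vy hUyo hUyne hVyo hVyne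
    obtain ⟨n, hn, hne⟩ := hgt Uy Vy hUyo hUyne hVyo hVyne
    exact ⟨n, hn, fun j => j.elim0, hne⟩
  | succ m ihm =>
    intro c hc U V hUo hUne hVo hVne Uy Vy hUyo hUyne hVyo hVyne
    have hK0 : 0 < c 0 := hc 0
    set K := c 0 with hKdef
    haveI : NeZero K := ⟨hK0.ne'⟩
    letI : MetricSpace (Fin K) := TopologicalSpace.metrizableSpaceMetric (Fin K)
    haveI : DiscreteTopology (Fin K) := Finite.instDiscreteTopology
    -- continuity of the auxiliary system
    have hHcont : ∀ n : ℕ, 1 ≤ n → Continuous (auxH f g c K n) := by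
      intro n hn
      have hrepr : auxH f g c K n = if (n - 1) % K = 0 then
          (fun z : (Fin m → X) × Y × Fin K =>
            ((fun j => nds f (((n - 1) / K) * c j.succ + 1) (c j.succ) (z.1 j)),
              g ((n - 1) / K + 1) z.2.1, z.2.2 + 1))
          else (fun z => (z.1, z.2.1, z.2.2 + 1)) := by
        by_cases h : (n - 1) % K = 0 <;> (funext z; simp [auxH, h])
      rw [hrepr]
      split_ifs with h
      · refine Continuous.prodMk ?_ (Continuous.prodMk ?_ ?_)
        · exact continuous_pi fun j =>
            (nds_continuous' hcont (Nat.le_add_left 1 _) _).comp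
              ((continuous_apply j).comp continuous_fst)
        · exact (hgc _ (Nat.le_add_left 1 _)).comp (continuous_fst.comp continuous_snd)
        · exact Continuous.comp (g := fun t : Fin K => t + 1)
            continuous_of_discreteTopology (continuous_snd.comp continuous_snd)
      · exact Continuous.prodMk continuous_fst (Continuous.prodMk
          (continuous_fst.comp continuous_snd)
          (Continuous.comp (g := fun t : Fin K => t + 1)
            continuous_of_discreteTopology (continuous_snd.comp continuous_snd)))
    -- transitivity of the auxiliary system, from the induction hypothesis
    have hHtrans : NDSTransitive (auxH f g c K) := by
      rintro A B hA ⟨⟨x₀, y₀, t₀⟩, hz₀⟩ hB ⟨⟨x₁, y₁, t₁⟩, hz₁⟩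
      obtain ⟨P, Q, hP, hQ, hx₀P, hyQ, hPQ⟩ := isOpen_prod_iff.1 hA _ _ hz₀
      obtain ⟨Py, Pk, hPy, hPk, hy₀, ht₀, hPyk⟩ := isOpen_prod_iff.1 hQ _ _ hyQ
      obtain ⟨I, u, hu, huP⟩ := isOpen_pi_iff.1 hP _ hx₀P
      obtain ⟨P', Q', hP', hQ', hx₁P, hy₁Q, hPQ'⟩ := isOpen_prod_iff.1 hB _ _ hz₁
      obtain ⟨Py', Pk', hPy', hPk', hy₁, ht₁, hPyk'⟩ := isOpen_prod_iff.1 hQ' _ _ hy₁Q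
      obtain ⟨I', v, hv, hvP⟩ := isOpen_pi_iff.1 hP' _ hx₁P
      set u' : Fin m → Set X := fun j => if j ∈ I then u j else univ with hu'def
      set v' : Fin m → Set X := fun j => if j ∈ I' then v j else univ with hv'def
      have hu'o : ∀ j, IsOpen (u' j) := by
        intro j; simp only [hu'def]; split_ifs with hj
        exacts [(hu j hj).1, isOpen_univ]
      have hx₀u' : ∀ j, x₀ j ∈ u' j := by
        intro j; simp only [hu'def]; split_ifs with hj
        exacts [(hu j hj).2, mem_univ _]
      have hv'o : ∀ j, IsOpen (v' j) := by
        intro j; simp only [hv'def]; split_ifs with hj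
        exacts [(hv j hj).1, isOpen_univ]
      have hx₁v' : ∀ j, x₁ j ∈ v' j := by
        intro j; simp only [hv'def]; split_ifs with hj
        exacts [(hv j hj).2, mem_univ _]
      have hu'sub : univ.pi u' ⊆ P := by
        intro p hp
        refine huP fun a ha => ?_
        have := hp a (mem_univ a)
        simp only [hu'def] at this
        rwa [if_pos (Finset.mem_coe.1 ha)] at this
      have hv'sub : univ.pi v' ⊆ P' := by
        intro p hp
        refine hvP fun a ha => ?_
        have := hp a (mem_univ a)
        simp only [hv'def] at this
        rwa [if_pos (Finset.mem_coe.1 ha)] at this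
      obtain ⟨l, hl, hXs, hYs⟩ := ihm (fun j => c j.succ) (fun j => hc j.succ)
        u' v' hu'o (fun j => ⟨x₀ j, hx₀u' j⟩) hv'o (fun j => ⟨x₁ j, hx₁v' j⟩)
        Py Py' hPy ⟨y₀, hy₀⟩ hPy' ⟨y₁, hy₁⟩
      -- choose the time within the right block so that the rotation lands correctly
      set r : ℕ := if (t₁ - t₀ : Fin K).val = 0 then K else (t₁ - t₀ : Fin K).val with hrdef
      have hr1 : 1 ≤ r := by
        simp only [hrdef]; split_ifs with h
        · exact hK0
        · exact Nat.one_le_iff_ne_zero.2 h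
      have hr2 : r ≤ K := by
        simp only [hrdef]; split_ifs with h
        · exact le_rfl
        · exact (t₁ - t₀ : Fin K).isLt.le
      have hcastr : ((( (l - 1) * K + r : ℕ)) : Fin K) = t₁ - t₀ := by
        have h1 : (((l - 1) * K : ℕ) : Fin K) = 0 :=
          Fin.natCast_eq_zero.2 (dvd_mul_left K (l - 1))
        rw [Nat.cast_add, h1, zero_add]
        by_cases h : (t₁ - t₀ : Fin K).val = 0
        · simp only [hrdef, if_pos h]
          rw [Fin.natCast_self]
          exact Fin.ext (by simp [h])
        · simp only [hrdef, if_neg h]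
          exact Fin.cast_val_eq_self _
      have hcl : clK K ((l - 1) * K + r) = l := by
        rw [clK_block K hK0 _ r hr1 hr2]; omega
      have hwit : ∀ j, ∃ p, p ∈ u' j ∧ nds f 1 (l * c j.succ) p ∈ v' j := by
        intro j
        obtain ⟨w, ⟨p, hp, hpw⟩, hwv⟩ := hXs j
        exact ⟨p, hp, hpw ▸ hwv⟩
      choose p hp hp' using hwit
      obtain ⟨wy, ⟨py, hpy, hpyw⟩, hwy⟩ := hYs
      refine ⟨(l - 1) * K + r, by omega,
        nds (auxH f g c K) 1 ((l - 1) * K + r) (p, py, t₀), ⟨(p, py, t₀), ?_, rfl⟩, ?_⟩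
      · exact hPQ ⟨hu'sub fun j _ => hp j, hPyk ⟨hpy, ht₀⟩⟩
      · rw [auxH_iter, hcl]
        refine hPQ' ⟨hv'sub fun j _ => hp' j, hPyk' ⟨hpyw ▸ hwy, ?_⟩⟩
        rw [hcastr, add_comm, sub_add_cancel]
        exact ht₁
    -- transport the auxiliary system into the universe of the mild mixing hypothesis
    have hκ : Isometry (kuratowskiEmbedding ((Fin m → X) × Y × Fin K)) :=
      kuratowskiEmbedding.isometry _
    haveI : CompactSpace (range (kuratowskiEmbedding ((Fin m → X) × Y × Fin K))) :=
      isCompact_iff_compactSpace.1 (isCompact_range hκ.continuous)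
    let e₀ : ((Fin m → X) × Y × Fin K) ≃ₜ range (kuratowskiEmbedding ((Fin m → X) × Y × Fin K)) :=
      Continuous.homeoOfEquivCompactToT2
        (f := Equiv.ofInjective _ hκ.injective) (hκ.continuous.subtype_mk _)
    let e : ((Fin m → X) × Y × Fin K) ≃ₜ
        ULift.{w} (range (kuratowskiEmbedding ((Fin m → X) × Y × Fin K))) :=
      e₀.trans Homeomorph.ulift.symm
    have hprod := hmm (ULift.{w} (range (kuratowskiEmbedding ((Fin m → X) × Y × Fin K))))
      (fun k => ⇑e ∘ auxH f g c K k ∘ ⇑e.symm)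
      (fun k hk => (e.continuous.comp ((hHcont k hk).comp e.symm.continuous)))
      (transitive_conj' e _ hHtrans)
    have hfH : NDSTransitive
        (fun k (q : X × ((Fin m → X) × Y × Fin K)) => (f k q.1, auxH f g c K k q.2)) :=
      transitive_prod_conj' e f (auxH f g c K) hprod
    -- extract the conclusion
    obtain ⟨n, hn, w, ⟨q, hqA, hqw⟩, hwB⟩ :=
      hfH ((U 0) ×ˢ ((univ.pi fun j => U j.succ) ×ˢ (Uy ×ˢ {(0 : Fin K)})))
        ((V 0) ×ˢ ((univ.pi fun j => V j.succ) ×ˢ (Vy ×ˢ {(0 : Fin K)})))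
        ((hUo 0).prod ((isOpen_set_pi finite_univ fun j _ => hUo j.succ).prod
          (hUyo.prod (isOpen_discrete _))))
        ⟨((hUne 0).some, fun j => (hUne j.succ).some, hUyne.some, 0),
          (hUne 0).some_mem, (fun j _ => (hUne j.succ).some_mem), hUyne.some_mem, rfl⟩
        ((hVo 0).prod ((isOpen_set_pi finite_univ fun j _ => hVo j.succ).prod
          (hVyo.prod (isOpen_discrete _))))
        ⟨((hVne 0).some, fun j => (hVne j.succ).some, hVyne.some, 0),
          (hVne 0).some_mem, (fun j _ => (hVne j.succ).some_mem), hVyne.some_mem, rfl⟩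
    rw [← hqw, nds_prod', auxH_iter] at hwB
    obtain ⟨hq1, hq2, hq3, hq4⟩ := hqA
    obtain ⟨hw1, hw2, hw3, hw4⟩ := hwB
    have hq40 : q.2.2.2 = 0 := hq4
    rw [hq40, zero_add] at hw4
    obtain ⟨l0, hl0⟩ := Fin.natCast_eq_zero.1 hw4
    have hl0pos : 0 < l0 := by
      rcases Nat.eq_zero_or_pos l0 with rfl | h
      · rw [mul_zero] at hl0; omega
      · exact h
    have hcln : clK K n = l0 := by rw [hl0, mul_comm, clK_mul K hK0]
    refine ⟨l0, hl0pos, ?_, ?_⟩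
    · intro j
      induction j using Fin.cases with
      | zero =>
        have hn0 : l0 * c 0 = n := by rw [← hKdef, mul_comm]; exact hl0.symm
        exact ⟨_, ⟨q.1, hq1, rfl⟩, by rw [hn0]; exact hw1⟩
      | succ j =>
        refine ⟨_, ⟨q.2.1 j, hq2 j (mem_univ j), rfl⟩, ?_⟩
        have := hw2 j (mem_univ j)
        rw [hcln] at this
        exact this
    · refine ⟨_, ⟨q.2.2.1, hq3, rfl⟩, ?_⟩
      rw [hcln] at hw3
      exact hw3

theorem mildlyMixing_implies_multiTransitive {X : Type*} [MetricSpace X] [CompactSpace X]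
    (f : ℕ → X → X) (hcont : ∀ n : ℕ, 1 ≤ n → Continuous (f n))
    (hmm : NDSMildlyMixing f) :
    NDSMultiTransitive f := by
  intro m hm U V hUo hUne hVo hVne
  have hPtrans : NDSTransitive (fun _ : ℕ => (id : PUnit.{1} → PUnit.{1})) := by
    intro A B _ hAne _ hBne
    obtain ⟨a, ha⟩ := hAne
    obtain ⟨b, hb⟩ := hBne
    exact ⟨1, one_pos, b, ⟨a, ha, Subsingleton.elim _ _⟩, hb⟩
  obtain ⟨l, hl, hparts, -⟩ := aux_multi f hcont hmm (fun _ : ℕ => (id : PUnit.{1} → PUnit.{1}))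
    (fun _ _ => continuous_id) hPtrans m (fun j => j.1 + 1) (fun j => Nat.succ_pos _)
    U V hUo hUne hVo hVne univ univ isOpen_univ ⟨PUnit.unit, mem_univ _⟩
    isOpen_univ ⟨PUnit.unit, mem_univ _⟩
  exact ⟨l, hl, hparts⟩
end

section
/- Let (X,d) be a compact metric space without isolated points and let (X, f_{1,∞}) be a non-autonomous discrete system such that f_{1,∞} is feeble open, each f_n is surjective, (f_n) converges uniformly to a continuous map f : X → X, and the compositions (f_r^k) converge collectively to (f^k). Then the map f is transitive if and only if f_{1,∞} is transitive. -/
open Set Filter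

section Aux

lemma nds_comp' {X : Type*} (f : ℕ → X → X) (m k : ℕ) (x : X) :
    nds f 1 (m + k) x = nds f (m + 1) k (nds f 1 m x) := by
  induction k with
  | zero => rfl
  | succ k ih =>
      show f (1 + (m + k)) (nds f 1 (m + k) x) = f (m + 1 + k) (nds f (m + 1) k (nds f 1 m x))
      rw [ih]
      congr 1
      omega

lemma nds_cont {X : Type*} [TopologicalSpace X] {f : ℕ → X → X}
    (hcont : ∀ n : ℕ, 1 ≤ n → Continuous (f n)) (n : ℕ) : Continuous (nds f 1 n) := by
  induction n with
  | zero => exact continuous_id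
  | succ n ih => exact (hcont (1 + n) (by omega)).comp ih

lemma nds_surj {X : Type*} {f : ℕ → X → X}
    (hsurj : ∀ n : ℕ, 1 ≤ n → Function.Surjective (f n)) (n : ℕ) :
    Function.Surjective (nds f 1 n) := by
  induction n with
  | zero => exact Function.surjective_id
  | succ n ih => exact (hsurj (1 + n) (by omega)).comp ih

lemma nds_image_open {X : Type*} [TopologicalSpace X] {f : ℕ → X → X}
    (hfo : FeebleOpen f) (n : ℕ) (U : Set X) (hU : IsOpen U) (hUne : U.Nonempty) :
    ∃ U' : Set X, IsOpen U' ∧ U'.Nonempty ∧ U' ⊆ nds f 1 n '' U := by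
  induction n with
  | zero => exact ⟨U, hU, hUne, by simp [nds]⟩
  | succ n ih =>
      obtain ⟨U', hU', hU'ne, hsub⟩ := ih
      obtain ⟨w, hw⟩ := hfo (1 + n) (by omega) U' hU' hU'ne
      refine ⟨interior (f (1 + n) '' U'), isOpen_interior, ⟨w, hw⟩, ?_⟩
      intro z hz
      obtain ⟨u', hu', rfl⟩ := interior_subset hz
      obtain ⟨u, hu, rfl⟩ := hsub hu'
      exact ⟨u, hu, rfl⟩

lemma exists_disjoint_opens {X : Type*} [MetricSpace X]
    (hX : ∀ x : X, ¬IsOpen ({x} : Set X)) {V : Set X} (hV : IsOpen V) (hVne : V.Nonempty) :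
    ∃ V₁ V₂ : Set X, IsOpen V₁ ∧ V₁.Nonempty ∧ IsOpen V₂ ∧ V₂.Nonempty ∧
      V₁ ⊆ V ∧ V₂ ⊆ V ∧ ∀ z, z ∈ V₁ → z ∉ V₂ := by
  obtain ⟨x, hx⟩ := hVne
  have hy : ∃ y ∈ V, y ≠ x := by
    by_contra h
    push_neg at h
    exact hX x ((Set.eq_singleton_iff_unique_mem.mpr ⟨hx, h⟩) ▸ hV)
  obtain ⟨y, hy, hyx⟩ := hy
  have hd : 0 < dist x y := dist_pos.mpr (Ne.symm hyx)
  refine ⟨V ∩ Metric.ball x (dist x y / 2), V ∩ Metric.ball y (dist x y / 2),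
    hV.inter Metric.isOpen_ball, ⟨x, hx, Metric.mem_ball_self (by linarith)⟩,
    hV.inter Metric.isOpen_ball, ⟨y, hy, Metric.mem_ball_self (by linarith)⟩,
    Set.inter_subset_left, Set.inter_subset_left, ?_⟩
  rintro z ⟨-, hz1⟩ ⟨-, hz2⟩
  rw [Metric.mem_ball] at hz1 hz2
  have := dist_triangle x z y
  rw [dist_comm x z] at this
  linarith

lemma hit_large {X : Type*} [MetricSpace X]
    (hX : ∀ x : X, ¬IsOpen ({x} : Set X)) (f : ℕ → X → X)
    (hcont : ∀ n : ℕ, 1 ≤ n → Continuous (f n))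
    (ht : NDSTransitive f) :
    ∀ r : ℕ, ∀ U V : Set X, IsOpen U → U.Nonempty → IsOpen V → V.Nonempty →
      ∃ n : ℕ, r ≤ n ∧ 0 < n ∧ (nds f 1 n '' U ∩ V).Nonempty := by
  intro r
  induction r with
  | zero =>
      intro U V hU hUne hV hVne
      obtain ⟨n, hn, h⟩ := ht U V hU hUne hV hVne
      exact ⟨n, Nat.zero_le _, hn, h⟩
  | succ r ih =>
      intro U V hU hUne hV hVne
      obtain ⟨V₁, V₂, hV₁, hV₁ne, hV₂, hV₂ne, hV₁V, hV₂V, hdis⟩ :=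
        exists_disjoint_opens hX hV hVne
      obtain ⟨n₁, hrn₁, hn₁, hhit₁⟩ := ih U V₁ hU hUne hV₁ hV₁ne
      by_cases hc : r + 1 ≤ n₁
      · exact ⟨n₁, hc, hn₁,
          hhit₁.mono (Set.inter_subset_inter Set.Subset.rfl hV₁V)⟩
      · set U₁ := U ∩ (nds f 1 n₁) ⁻¹' V₁ with hU₁def
        have hU₁ : IsOpen U₁ := hU.inter (hV₁.preimage (nds_cont hcont n₁))
        have hU₁ne : U₁.Nonempty := by
          obtain ⟨z, hz1, hz2⟩ := hhit₁
          obtain ⟨u, hu, rfl⟩ := hz1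
          exact ⟨u, hu, hz2⟩
        obtain ⟨n₂, hrn₂, hn₂, hhit₂⟩ := ih U₁ V₂ hU₁ hU₁ne hV₂ hV₂ne
        have hne : n₂ ≠ n₁ := by
          rintro rfl
          obtain ⟨z, ⟨u, hu, rfl⟩, hz2⟩ := hhit₂
          exact hdis _ hu.2 hz2
        refine ⟨n₂, by omega, hn₂, ?_⟩
        exact hhit₂.mono (Set.inter_subset_inter
          (Set.image_mono Set.inter_subset_left) hV₂V)

end Aux

theorem transitive_iff_limit_transitive {X : Type*} [MetricSpace X] [CompactSpace X]
    (hX : ∀ x : X, ¬IsOpen ({x} : Set X))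
    (f : ℕ → X → X) (F : X → X)
    (hcont : ∀ n : ℕ, 1 ≤ n → Continuous (f n))
    (hfo : FeebleOpen f)
    (hsurj : ∀ n : ℕ, 1 ≤ n → Function.Surjective (f n))
    (hF : Continuous F)
    (hunif : TendstoUniformly (fun n x => f n x) F Filter.atTop)
    (hcoll : CollectivelyConverges f F) :
    MapTransitive F ↔ NDSTransitive f := by
  constructor
  · -- Map transitive → NDS transitive
    intro hmap U V hU hUne hV hVne
    obtain ⟨x, hx⟩ := hVne
    obtain ⟨δ, hδ, hδsub⟩ := Metric.isOpen_iff.mp hV x hx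
    set ε := δ / 2 with hεdef
    have hε : 0 < ε := by positivity
    have hball : Metric.ball x (2 * ε) ⊆ V := by
      intro z hz
      apply hδsub
      rw [Metric.mem_ball] at hz ⊢
      rw [hεdef] at hz
      linarith
    obtain ⟨r₀, hr₀⟩ := hcoll ε hε
    set r := max r₀ 1 with hrdef
    set m := r - 1 with hmdef
    have hm : m + 1 = r := by omega
    obtain ⟨U', hU'o, hU'ne, hU'sub⟩ := nds_image_open hfo m U hU hUne
    obtain ⟨k, hk, z, ⟨u', hu', rfl⟩, hzball⟩ :=
      hmap U' (Metric.ball x ε) hU'o hU'ne Metric.isOpen_ball ⟨x, Metric.mem_ball_self hε⟩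
    obtain ⟨u, hu, rfl⟩ := hU'sub hu'
    refine ⟨m + k, by omega, nds f 1 (m + k) u, ⟨u, hu, rfl⟩, ?_⟩
    apply hball
    have hco : nds f 1 (m + k) u = nds f r k (nds f 1 m u) := by
      rw [nds_comp', hm]
    have hd := hr₀ r (le_max_left _ _) k hk (nds f 1 m u)
    rw [Metric.mem_ball] at hzball ⊢
    rw [hco]
    calc dist (nds f r k (nds f 1 m u)) x
        ≤ dist (nds f r k (nds f 1 m u)) (F^[k] (nds f 1 m u))
          + dist (F^[k] (nds f 1 m u)) x := dist_triangle _ _ _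
      _ < ε + ε := add_lt_add hd hzball
      _ = 2 * ε := by ring
  · -- NDS transitive → Map transitive
    intro htrans U V hU hUne hV hVne
    obtain ⟨x, hx⟩ := hVne
    obtain ⟨δ, hδ, hδsub⟩ := Metric.isOpen_iff.mp hV x hx
    set ε := δ / 2 with hεdef
    have hε : 0 < ε := by positivity
    have hball : Metric.ball x (2 * ε) ⊆ V := by
      intro z hz
      apply hδsub
      rw [Metric.mem_ball] at hz ⊢
      rw [hεdef] at hz
      linarith
    obtain ⟨r₀, hr₀⟩ := hcoll ε hε
    set r := max r₀ 1 with hrdef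
    set m := r - 1 with hmdef
    have hm : m + 1 = r := by omega
    set W := (nds f 1 m) ⁻¹' U with hWdef
    have hWopen : IsOpen W := hU.preimage (nds_cont hcont m)
    have hWne : W.Nonempty := hUne.preimage (nds_surj hsurj m)
    obtain ⟨n, hrn, hn, hhit⟩ := hit_large hX f hcont htrans r W (Metric.ball x ε)
      hWopen hWne Metric.isOpen_ball ⟨x, Metric.mem_ball_self hε⟩
    set k := n - m with hkdef
    have hk1 : 1 ≤ k := by omega
    have hmk : m + k = n := by omega
    obtain ⟨z, ⟨w, hw, rfl⟩, hzball⟩ := hhit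
    have hco : nds f 1 n w = nds f r k (nds f 1 m w) := by
      rw [← hmk, nds_comp', hm]
    have hd := hr₀ r (le_max_left _ _) k hk1 (nds f 1 m w)
    refine ⟨k, by omega, F^[k] (nds f 1 m w), ⟨nds f 1 m w, hw, rfl⟩, ?_⟩
    apply hball
    rw [Metric.mem_ball] at hzball ⊢
    rw [hco] at hzball
    calc dist (F^[k] (nds f 1 m w)) x
        ≤ dist (F^[k] (nds f 1 m w)) (nds f r k (nds f 1 m w))
          + dist (nds f r k (nds f 1 m w)) x := dist_triangle _ _ _
      _ < ε + ε := add_lt_add (by rw [dist_comm]; exact hd) hzball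
      _ = 2 * ε := by ring
end
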